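/- (Itô isometry for Liouville fBm, case 1/2 < β < 1.) Let T > 0 and 1/2 < β < 1. (a) For all s,t ∈ [0,T], the L²(0,T) inner product satisfies ⟨ I_{T-}^{β-1/2} 1_{(0,s)}, I_{T-}^{β-1/2} 1_{(0,t)} ⟩_{L²(0,T)} = Γ^β_{s,t}. (b) Consequently, if (Ω, F, P) is a probability space carrying random variables W(t) ∈ L²(Ω), t ∈ [0,T], with E[W(t)] = 0 and E[W(s)W(t)] = Γ^β_{s,t} for all s,t ∈ [0,T], then for every step function f = Σ_{j=1}^N c_j 1_{(a_j,b_j]} with 0 ≤ a_j < b_j ≤ T and c_j ∈ ℝ, E| Σ_{j=1}^N c_j ( W(b_j) − W(a_j) ) |² = ‖ I_{T-}^{β-1/2} f ‖²_{L²(0,T)}. -/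

import Mathlib

open MeasureTheory Set
open scoped NNReal ENNReal

/-- The left Liouville fractional integral of order `α` on `(a,·)`:
`(I_{a+}^α f)(t) = Γ(α)⁻¹ ∫_a^t (t-s)^(α-1) f(s) ds`. -/
noncomputable def leftFrac (a α : ℝ) (f : ℝ → ℝ) : ℝ → ℝ :=
  fun t => (Real.Gamma α)⁻¹ * ∫ s in Ioo a t, (t - s) ^ (α - 1) * f s

/-- The right Liouville fractional integral of order `α` on `(·,b)`:
`(I_{b-}^α f)(t) = Γ(α)⁻¹ ∫_t^b (s-t)^(α-1) f(s) ds`. -/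
noncomputable def rightFrac (b α : ℝ) (f : ℝ → ℝ) : ℝ → ℝ :=
  fun t => (Real.Gamma α)⁻¹ * ∫ s in Ioo t b, (s - t) ^ (α - 1) * f s

/-- Lebesgue measure restricted to the interval `(a,b)`, modelling `L²(a,b)`. -/
noncomputable def msr (a b : ℝ) : Measure ℝ := volume.restrict (Ioo a b)

/-- The Liouville fBm covariance
`Γ^β_{s,t} = Γ(β+1/2)⁻² ∫_0^{s∧t} (s-u)^(β-1/2) (t-u)^(β-1/2) du`. -/
noncomputable def fbmCov (β s t : ℝ) : ℝ :=
  ((Real.Gamma (β + 1/2)) ^ 2)⁻¹ *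
    ∫ u in Ioo 0 (min s t), (s - u) ^ (β - 1/2) * (t - u) ^ (β - 1/2)

lemma memL2_mul_integrable {α : Type*} [MeasurableSpace α] {μ : Measure α} {f g : α → ℝ}
    (hf : MemLp f 2 μ) (hg : MemLp g 2 μ) : Integrable (fun x => f x * g x) μ := by
  have h1 := (hf.add hg).integrable_sq
  have h2 := hf.integrable_sq
  have h3 := hg.integrable_sq
  have heq : (fun x => f x * g x) = fun x => (((f x + g x)^2) - f x^2 - g x^2)/2 := by
    funext x; ring
  rw [heq]
  exact (((h1.sub h2).sub h3).div_const 2)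

/-- The closed-form kernel `(max (t-u) 0)^α / Γ(α+1)`. -/
noncomputable def Kker (α t u : ℝ) : ℝ := (max (t - u) 0) ^ α / Real.Gamma (α + 1)

lemma Kker_continuous {α : ℝ} (hα : 0 < α) (t : ℝ) : Continuous (fun u => Kker α t u) := by
  apply Continuous.div_const
  rw [continuous_iff_continuousAt]
  intro x
  exact (Real.continuousAt_rpow_const _ _ (Or.inr hα.le)).comp
    ((continuous_const.sub continuous_id).max continuous_const).continuousAt

lemma integrableOn_rpow_shift {α : ℝ} (hα : 0 < α) (u c : ℝ) :
    IntegrableOn (fun s => (s - u) ^ (α - 1)) (Ioc u c) := by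
  have h : IntervalIntegrable (fun x : ℝ => x ^ (α - 1)) volume 0 (c - u) :=
    intervalIntegral.intervalIntegrable_rpow' (by linarith)
  have h2 := h.comp_sub_right u
  simp only [zero_add, sub_add_cancel] at h2
  exact h2.1

lemma integrableOn_kernel_indicator {α : ℝ} (hα : 0 < α) (u T : ℝ) {S : Set ℝ}
    (hS : MeasurableSet S) :
    IntegrableOn (fun s => (s - u) ^ (α - 1) * S.indicator (fun _ => (1:ℝ)) s) (Ioo u T) := by
  have h1 : IntegrableOn (fun s => (s - u) ^ (α - 1)) (Ioo u T) :=
    (integrableOn_rpow_shift hα u T).mono_set Ioo_subset_Ioc_self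
  have heq : (fun s => (s - u) ^ (α - 1) * S.indicator (fun _ => (1:ℝ)) s)
      = S.indicator (fun s => (s - u) ^ (α - 1)) := by
    funext s
    by_cases hs : s ∈ S <;> simp [hs]
  rw [heq]
  exact h1.indicator hS

lemma rightFrac_ind_Ioo {α T t u : ℝ} (hα : 0 < α) (hu : u ∈ Ioo 0 T) (ht : t ≤ T) :
    rightFrac T α ((Ioo 0 t).indicator fun _ => (1:ℝ)) u = Kker α t u := by
  unfold rightFrac Kker
  have key : (∫ s in Ioo u T, (s - u) ^ (α - 1) * (Ioo 0 t).indicator (fun _ => (1:ℝ)) s)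
      = ∫ s in Ioo u t, (s - u) ^ (α - 1) := by
    have heq : (fun s => (s - u) ^ (α - 1) * (Ioo 0 t).indicator (fun _ => (1:ℝ)) s)
        = (Ioo 0 t).indicator (fun s => (s - u) ^ (α - 1)) := by
      funext s; by_cases hs : s ∈ Ioo 0 t <;> simp [hs]
    rw [heq, setIntegral_indicator measurableSet_Ioo, Ioo_inter_Ioo,
      max_eq_left hu.1.le, min_eq_right ht]
  rw [key]
  rcases lt_or_ge u t with h | h
  · have h2 : (∫ s in Ioo u t, (s - u) ^ (α - 1)) = ∫ s in u..t, (s - u) ^ (α - 1) := by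
      rw [intervalIntegral.integral_of_le h.le, integral_Ioc_eq_integral_Ioo]
    have h3 : (∫ s in u..t, (s - u) ^ (α - 1)) = ∫ x in (u-u)..(t-u), x ^ (α - 1) :=
      (intervalIntegral.integral_comp_sub_right (fun x => x ^ (α - 1)) u)
    have h4 : (∫ x in (0:ℝ)..(t-u), x ^ (α - 1)) = ((t-u) ^ α - (0:ℝ) ^ α) / α := by
      rw [integral_rpow (Or.inl (by linarith))]
      norm_num
    rw [h2, h3, sub_self, h4, Real.zero_rpow hα.ne', sub_zero,
      max_eq_left (by linarith : (0:ℝ) ≤ t - u), Real.Gamma_add_one hα.ne']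
    have hΓ : Real.Gamma α ≠ 0 := (Real.Gamma_pos_of_pos hα).ne'
    field_simp
  · rw [Ioo_eq_empty (not_lt.2 h), Measure.restrict_empty, integral_zero_measure,
      max_eq_right (by linarith : t - u ≤ 0), Real.zero_rpow hα.ne', zero_div, mul_zero]

lemma indicator_Ioc_eq {a b s : ℝ} (ha : 0 ≤ a) (hab : a ≤ b) (hsa : s ≠ a) (hsb : s ≠ b) :
    (Ioc a b).indicator (fun _ => (1:ℝ)) s
      = (Ioo 0 b).indicator (fun _ => (1:ℝ)) s - (Ioo 0 a).indicator (fun _ => (1:ℝ)) s := by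
  by_cases h1 : s ∈ Ioc a b
  · have hb' : s ∈ Ioo 0 b := ⟨lt_of_le_of_lt ha h1.1, lt_of_le_of_ne h1.2 hsb⟩
    have h2 : s ∉ Ioo 0 a := fun hh => absurd hh.2 (not_lt.2 h1.1.le)
    simp [h1, hb', h2]
  · by_cases h3 : s ∈ Ioo 0 a
    · have hb' : s ∈ Ioo 0 b := ⟨h3.1, lt_of_lt_of_le h3.2 hab⟩
      simp [h1, h3, hb']
    · have hb' : s ∉ Ioo 0 b := by
        intro hh
        apply h1
        refine ⟨?_, hh.2.le⟩
        rcases lt_or_ge a s with h | h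
        · exact h
        · exact absurd ⟨hh.1, lt_of_le_of_ne h hsa⟩ h3
      simp [h1, h3, hb']

lemma rightFrac_ind_Ioc {α T a b u : ℝ} (hα : 0 < α) (hu : u ∈ Ioo 0 T)
    (ha : 0 ≤ a) (hab : a ≤ b) (hb : b ≤ T) :
    rightFrac T α ((Ioc a b).indicator fun _ => (1:ℝ)) u = Kker α b u - Kker α a u := by
  have hnull : ∀ᵐ s ∂(volume : Measure ℝ), s ∉ ({a, b} : Set ℝ) :=
    measure_eq_zero_iff_ae_notMem.mp (Set.Finite.measure_zero (by simp) _)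
  have hcong : ∀ᵐ s ∂(volume.restrict (Ioo u T)),
      (s - u) ^ (α - 1) * (Ioc a b).indicator (fun _ => (1:ℝ)) s
      = (s - u) ^ (α - 1) * (Ioo 0 b).indicator (fun _ => (1:ℝ)) s
        - (s - u) ^ (α - 1) * (Ioo 0 a).indicator (fun _ => (1:ℝ)) s := by
    filter_upwards [ae_restrict_of_ae hnull] with s hs
    have hsa : s ≠ a := fun h => hs (by simp [h])
    have hsb : s ≠ b := fun h => hs (by simp [h])
    rw [indicator_Ioc_eq ha hab hsa hsb]
    ring
  unfold rightFrac
  rw [integral_congr_ae hcong,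
    integral_sub (integrableOn_kernel_indicator hα u T measurableSet_Ioo)
      (integrableOn_kernel_indicator hα u T measurableSet_Ioo), mul_sub]
  rw [show (Real.Gamma α)⁻¹ * (∫ s in Ioo u T, (s - u) ^ (α - 1) * (Ioo 0 b).indicator (fun _ => (1:ℝ)) s)
      = rightFrac T α ((Ioo 0 b).indicator fun _ => (1:ℝ)) u from rfl,
    show (Real.Gamma α)⁻¹ * (∫ s in Ioo u T, (s - u) ^ (α - 1) * (Ioo 0 a).indicator (fun _ => (1:ℝ)) s)
      = rightFrac T α ((Ioo 0 a).indicator fun _ => (1:ℝ)) u from rfl,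
    rightFrac_ind_Ioo hα hu hb, rightFrac_ind_Ioo hα hu (le_trans hab hb)]

lemma Kker_inner {α T s t : ℝ} (hα : 0 < α) (hs : s ≤ T) :
    (∫ u in Ioo 0 T, Kker α s u * Kker α t u)
      = ((Real.Gamma (α+1))^2)⁻¹ * ∫ u in Ioo 0 (min s t), (s-u)^α * (t-u)^α := by
  set m := min s t with hm
  have heq : (fun u => Kker α s u * Kker α t u)
      = (Iio m).indicator (fun u => (s-u)^α * (t-u)^α / (Real.Gamma (α+1))^2) := by
    funext u
    by_cases hu : u < m
    · have h1 : 0 ≤ s - u := by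
        have := lt_of_lt_of_le hu (min_le_left s t); linarith
      have h2 : 0 ≤ t - u := by
        have := lt_of_lt_of_le hu (min_le_right s t); linarith
      rw [indicator_of_mem (mem_Iio.mpr hu)]
      unfold Kker
      rw [max_eq_left h1, max_eq_left h2, div_mul_div_comm, ← pow_two]
    · rw [indicator_of_notMem (by simpa using hu)]
      have hmu : m ≤ u := not_lt.mp hu
      unfold Kker
      rcases min_le_iff.mp hmu with h | h
      · rw [max_eq_right (by linarith : s - u ≤ 0), Real.zero_rpow hα.ne', zero_div, zero_mul]
      · rw [max_eq_right (by linarith : t - u ≤ 0), Real.zero_rpow hα.ne', zero_div, mul_zero]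
  have hmT : m ≤ T := le_trans (min_le_left s t) hs
  rw [heq, setIntegral_indicator measurableSet_Iio, Ioo_inter_Iio, min_eq_right hmT,
    integral_div, inv_mul_eq_div]

theorem ito_isometry_liouville_fbm_large_hurst
    {Ω : Type*} [MeasurableSpace Ω] (P : Measure Ω) [IsProbabilityMeasure P]
    (T β : ℝ) (hT : 0 < T) (hβ : 1/2 < β) (hβ' : β < 1)
    (W : ℝ → Ω → ℝ)
    (hW2 : ∀ t ∈ Icc (0 : ℝ) T, MemLp (W t) 2 P)
    (hWmean : ∀ t ∈ Icc (0 : ℝ) T, ∫ ω, W t ω ∂P = 0)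
    (hWcov : ∀ s ∈ Icc (0 : ℝ) T, ∀ t ∈ Icc (0 : ℝ) T,
      ∫ ω, W s ω * W t ω ∂P = fbmCov β s t) :
    -- (a) the L²(0,T) inner product of the fractional integrals of indicators
    -- reproduces the covariance
    (∀ s ∈ Icc (0 : ℝ) T, ∀ t ∈ Icc (0 : ℝ) T,
      ∫ u in Ioo 0 T,
        rightFrac T (β - 1/2) ((Ioo 0 s).indicator fun _ => (1 : ℝ)) u *
        rightFrac T (β - 1/2) ((Ioo 0 t).indicator fun _ => (1 : ℝ)) u
        = fbmCov β s t) ∧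
    -- (b) the Itô isometry for step functions
    (∀ (N : ℕ) (A B c : Fin N → ℝ), (∀ j, 0 ≤ A j ∧ A j < B j ∧ B j ≤ T) →
      ∫ ω, (∑ j, c j * (W (B j) ω - W (A j) ω)) ^ 2 ∂P =
        ∫ u in Ioo 0 T,
          (rightFrac T (β - 1/2)
            (fun s => ∑ j, c j * (Ioc (A j) (B j)).indicator (fun _ => (1 : ℝ)) s) u) ^ 2) := by
  have hα : 0 < β - 1/2 := by linarith
  -- the covariance identity for the closed-form kernels
  have hKK : ∀ s ∈ Icc (0:ℝ) T, ∀ t ∈ Icc (0:ℝ) T,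
      (∫ u in Ioo 0 T, Kker (β - 1/2) s u * Kker (β - 1/2) t u) = fbmCov β s t := by
    intro s hs t ht
    rw [Kker_inner hα hs.2]
    unfold fbmCov
    rw [show β - 1/2 + 1 = β + 1/2 from by ring]
  constructor
  · -- part (a)
    intro s hs t ht
    rw [setIntegral_congr_fun measurableSet_Ioo
      (fun u hu => by
        dsimp only
        rw [rightFrac_ind_Ioo hα hu hs.2, rightFrac_ind_Ioo hα hu ht.2] :
        EqOn (fun u => rightFrac T (β - 1/2) ((Ioo 0 s).indicator fun _ => (1:ℝ)) u *
          rightFrac T (β - 1/2) ((Ioo 0 t).indicator fun _ => (1:ℝ)) u)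
          (fun u => Kker (β - 1/2) s u * Kker (β - 1/2) t u) (Ioo 0 T))]
    exact hKK s hs t ht
  · -- part (b)
    intro N A B c hAB
    have hA : ∀ j, A j ∈ Icc (0:ℝ) T :=
      fun j => ⟨(hAB j).1, le_trans (hAB j).2.1.le (hAB j).2.2⟩
    have hB : ∀ j, B j ∈ Icc (0:ℝ) T :=
      fun j => ⟨le_trans (hAB j).1 (hAB j).2.1.le, (hAB j).2.2⟩
    -- integrability of pairwise products of the W's
    have hWint : ∀ s ∈ Icc (0:ℝ) T, ∀ t ∈ Icc (0:ℝ) T,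
        Integrable (fun ω => W s ω * W t ω) P :=
      fun s hs t ht => memL2_mul_integrable (hW2 s hs) (hW2 t ht)
    have hXint : ∀ j k : Fin N,
        Integrable (fun ω => (W (B j) ω - W (A j) ω) * (W (B k) ω - W (A k) ω)) P :=
      fun j k => memL2_mul_integrable ((hW2 _ (hB j)).sub (hW2 _ (hA j)))
        ((hW2 _ (hB k)).sub (hW2 _ (hA k)))
    have hXcov : ∀ j k : Fin N,
        (∫ ω, (W (B j) ω - W (A j) ω) * (W (B k) ω - W (A k) ω) ∂P)
          = fbmCov β (B j) (B k) - fbmCov β (B j) (A k)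
            - (fbmCov β (A j) (B k) - fbmCov β (A j) (A k)) := by
      intro j k
      have e : (fun ω => (W (B j) ω - W (A j) ω) * (W (B k) ω - W (A k) ω))
          = fun ω => (W (B j) ω * W (B k) ω - W (B j) ω * W (A k) ω)
              - (W (A j) ω * W (B k) ω - W (A j) ω * W (A k) ω) := by
        funext ω; ring
      have i1 := hWint _ (hB j) _ (hB k)
      have i2 := hWint _ (hB j) _ (hA k)
      have i3 := hWint _ (hA j) _ (hB k)
      have i4 := hWint _ (hA j) _ (hA k)
      have i12 : Integrable (fun ω => W (B j) ω * W (B k) ω - W (B j) ω * W (A k) ω) P :=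
        i1.sub i2
      have i34 : Integrable (fun ω => W (A j) ω * W (B k) ω - W (A j) ω * W (A k) ω) P :=
        i3.sub i4
      rw [e, integral_sub i12 i34, integral_sub i1 i2, integral_sub i3 i4,
        hWcov _ (hB j) _ (hB k), hWcov _ (hB j) _ (hA k), hWcov _ (hA j) _ (hB k),
        hWcov _ (hA j) _ (hA k)]
    -- LHS computation
    have lhs_eq : (∫ ω, (∑ j, c j * (W (B j) ω - W (A j) ω)) ^ 2 ∂P)
        = ∑ j, ∑ k, (c j * c k) *
            (fbmCov β (B j) (B k) - fbmCov β (B j) (A k)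
              - (fbmCov β (A j) (B k) - fbmCov β (A j) (A k))) := by
      have e1 : (fun ω => (∑ j, c j * (W (B j) ω - W (A j) ω)) ^ 2)
          = fun ω => ∑ j, ∑ k, (c j * c k) *
              ((W (B j) ω - W (A j) ω) * (W (B k) ω - W (A k) ω)) := by
        funext ω
        rw [pow_two, Finset.sum_mul_sum]
        exact Finset.sum_congr rfl fun j _ => Finset.sum_congr rfl fun k _ => by ring
      rw [e1, integral_finset_sum _ (fun j _ =>
        integrable_finset_sum _ (fun k _ => (hXint j k).const_mul _))]
      refine Finset.sum_congr rfl fun j _ => ?_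
      rw [integral_finset_sum _ (fun k _ => (hXint j k).const_mul _)]
      refine Finset.sum_congr rfl fun k _ => ?_
      rw [integral_const_mul, hXcov j k]
    rw [lhs_eq]
    -- RHS computation
    have hrf : ∀ u ∈ Ioo (0:ℝ) T,
        rightFrac T (β - 1/2)
          (fun s => ∑ j, c j * (Ioc (A j) (B j)).indicator (fun _ => (1:ℝ)) s) u
        = ∑ j, c j * (Kker (β - 1/2) (B j) u - Kker (β - 1/2) (A j) u) := by
      intro u hu
      unfold rightFrac
      have h1 : ∀ s : ℝ, (s - u) ^ (β - 1/2 - 1) *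
            (∑ j, c j * (Ioc (A j) (B j)).indicator (fun _ => (1:ℝ)) s)
          = ∑ j, c j * ((s - u) ^ (β - 1/2 - 1) *
              (Ioc (A j) (B j)).indicator (fun _ => (1:ℝ)) s) := by
        intro s
        rw [Finset.mul_sum]
        exact Finset.sum_congr rfl fun j _ => by ring
      simp_rw [h1]
      rw [integral_finset_sum _ (fun j _ =>
        (integrableOn_kernel_indicator hα u T measurableSet_Ioc).const_mul (c j)),
        Finset.mul_sum]
      refine Finset.sum_congr rfl fun j _ => ?_
      rw [integral_const_mul, ← mul_assoc, mul_comm ((Real.Gamma (β - 1/2))⁻¹) (c j), mul_assoc]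
      congr 1
      exact rightFrac_ind_Ioc hα hu (hAB j).1 (hAB j).2.1.le (hAB j).2.2
    have hKcont : ∀ t : ℝ, Continuous (fun u => Kker (β - 1/2) t u) := Kker_continuous hα
    have hKint : ∀ s t : ℝ,
        IntegrableOn (fun u => Kker (β - 1/2) s u * Kker (β - 1/2) t u) (Ioo 0 T) :=
      fun s t => (((hKcont s).mul (hKcont t)).integrableOn_Icc).mono_set Ioo_subset_Icc_self
    have hFint : ∀ j k : Fin N,
        IntegrableOn (fun u => (c j * (Kker (β - 1/2) (B j) u - Kker (β - 1/2) (A j) u)) *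
          (c k * (Kker (β - 1/2) (B k) u - Kker (β - 1/2) (A k) u))) (Ioo 0 T) := by
      intro j k
      exact ((((continuous_const.mul ((hKcont (B j)).sub (hKcont (A j)))).mul
        (continuous_const.mul ((hKcont (B k)).sub (hKcont (A k))))).integrableOn_Icc).mono_set
        Ioo_subset_Icc_self)
    have rhs_eq : (∫ u in Ioo 0 T,
          (rightFrac T (β - 1/2)
            (fun s => ∑ j, c j * (Ioc (A j) (B j)).indicator (fun _ => (1:ℝ)) s) u) ^ 2)
        = ∑ j, ∑ k, (c j * c k) *
            (fbmCov β (B j) (B k) - fbmCov β (B j) (A k)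
              - (fbmCov β (A j) (B k) - fbmCov β (A j) (A k))) := by
      rw [setIntegral_congr_fun measurableSet_Ioo
        (fun u hu => by dsimp only; rw [hrf u hu] :
          EqOn (fun u => (rightFrac T (β - 1/2)
              (fun s => ∑ j, c j * (Ioc (A j) (B j)).indicator (fun _ => (1:ℝ)) s) u) ^ 2)
            (fun u => (∑ j, c j * (Kker (β - 1/2) (B j) u - Kker (β - 1/2) (A j) u)) ^ 2)
            (Ioo 0 T))]
      have e1 : (fun u => (∑ j, c j * (Kker (β - 1/2) (B j) u - Kker (β - 1/2) (A j) u)) ^ 2)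
          = fun u => ∑ j, ∑ k,
              (c j * (Kker (β - 1/2) (B j) u - Kker (β - 1/2) (A j) u)) *
              (c k * (Kker (β - 1/2) (B k) u - Kker (β - 1/2) (A k) u)) := by
        funext u
        rw [pow_two, Finset.sum_mul_sum]
      rw [e1, integral_finset_sum _ (fun j _ =>
        integrable_finset_sum _ (fun k _ => hFint j k))]
      refine Finset.sum_congr rfl fun j _ => ?_
      rw [integral_finset_sum _ (fun k _ => hFint j k)]
      refine Finset.sum_congr rfl fun k _ => ?_
      have e2 : (fun u => (c j * (Kker (β - 1/2) (B j) u - Kker (β - 1/2) (A j) u)) *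
            (c k * (Kker (β - 1/2) (B k) u - Kker (β - 1/2) (A k) u)))
          = fun u => (c j * c k) *
              ((Kker (β - 1/2) (B j) u * Kker (β - 1/2) (B k) u
                - Kker (β - 1/2) (B j) u * Kker (β - 1/2) (A k) u)
              - (Kker (β - 1/2) (A j) u * Kker (β - 1/2) (B k) u
                - Kker (β - 1/2) (A j) u * Kker (β - 1/2) (A k) u)) := by
        funext u; ring
      rw [e2, integral_const_mul]
      congr 1
      have k1 := hKint (B j) (B k)
      have k2 := hKint (B j) (A k)
      have k3 := hKint (A j) (B k)
      have k4 := hKint (A j) (A k)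
      have k12 : IntegrableOn (fun u => Kker (β - 1/2) (B j) u * Kker (β - 1/2) (B k) u
          - Kker (β - 1/2) (B j) u * Kker (β - 1/2) (A k) u) (Ioo 0 T) := k1.sub k2
      have k34 : IntegrableOn (fun u => Kker (β - 1/2) (A j) u * Kker (β - 1/2) (B k) u
          - Kker (β - 1/2) (A j) u * Kker (β - 1/2) (A k) u) (Ioo 0 T) := k3.sub k4
      rw [integral_sub k12 k34, integral_sub k1 k2, integral_sub k3 k4,
        hKK _ (hB j) _ (hB k), hKK _ (hB j) _ (hA k), hKK _ (hA j) _ (hB k),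
        hKK _ (hA j) _ (hA k)]
    rw [rhs_eq]
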